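/- Let f, d : {0,1}^n → ℝ be nonnegative functions, let λ ∈ ℝ, and suppose (Ad)(x) ≥ λ·d(x) for every x ∈ {0,1}^n, where A is the adjacency operator of the Hamming graph. Let g = f ∗ d. Then ⟨Ag, g⟩ ≥ λ·⟨g, g⟩ = λ·E[g²]. -/
import Mathlib


/-- The adjacency operator of the Hamming graph on `{0,1}^n`. -/
def adjOp {n : ℕ} (f : (Fin n → Bool) → ℝ) (x : Fin n → Bool) : ℝ :=
  ∑ y ∈ Finset.univ.filter fun y => hammingDist x y = 1, f y

/-- Inner product `⟨f, g⟩ = E_x[f(x)·g(x)]`, `x` uniform in `{0,1}^n`. -/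
noncomputable def cubeInner {n : ℕ} (f g : (Fin n → Bool) → ℝ) : ℝ :=
  (∑ x, f x * g x) / 2 ^ n

/-- Convolution on `{0,1}^n`: `(f ∗ d)(x) = E_y[f(y)·d(x ⊕ y)]`, `y` uniform. -/
noncomputable def cubeConv {n : ℕ} (f d : (Fin n → Bool) → ℝ) (x : Fin n → Bool) : ℝ :=
  (∑ y, f y * d fun i => xor (x i) (y i)) / 2 ^ n

lemma hd_xor {n : ℕ} (x y z : Fin n → Bool) :
    hammingDist (fun i => xor (x i) (z i)) (fun i => xor (y i) (z i)) = hammingDist x y := by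
  simp only [hammingDist]
  congr 1
  apply Finset.filter_congr
  intro i _
  cases x i <;> cases y i <;> cases z i <;> simp

lemma xor_xor {n : ℕ} (y z : Fin n → Bool) :
    (fun i => xor (xor (y i) (z i)) (z i)) = y := by
  funext i; cases y i <;> cases z i <;> simp

lemma adj_conv {n : ℕ} (f d : (Fin n → Bool) → ℝ) (x : Fin n → Bool) :
    adjOp (cubeConv f d) x = cubeConv f (adjOp d) x := by
  unfold adjOp cubeConv
  rw [← Finset.sum_div]
  congr 1
  rw [Finset.sum_comm]
  apply Finset.sum_congr rfl
  intro z _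
  rw [← Finset.mul_sum]
  congr 1
  apply Finset.sum_bij' (i := fun y _ => fun i => xor (y i) (z i))
    (j := fun w _ => fun i => xor (w i) (z i))
  · intro y hy
    simp only [Finset.mem_filter, Finset.mem_univ, true_and] at hy ⊢
    rw [← hy]
    exact hd_xor x y z
  · intro w hw
    simp only [Finset.mem_filter, Finset.mem_univ, true_and] at hw ⊢
    rw [← hw, ← hd_xor x _ z, xor_xor]
  · intro y _; exact xor_xor y z
  · intro w _; exact xor_xor w z
  · intro y _; rfl

lemma conv_nonneg {n : ℕ} (f d : (Fin n → Bool) → ℝ)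
    (hf : ∀ x, 0 ≤ f x) (hd : ∀ x, 0 ≤ d x) (x : Fin n → Bool) :
    0 ≤ cubeConv f d x := by
  unfold cubeConv
  apply div_nonneg _ (by positivity)
  exact Finset.sum_nonneg fun y _ => mul_nonneg (hf y) (hd _)

/-- If `f, d ≥ 0` and `Ad ≥ λ·d` pointwise, then `g = f ∗ d` satisfies
`⟨Ag, g⟩ ≥ λ·⟨g, g⟩` (and `⟨g, g⟩ = E[g²]`). -/
theorem rayleigh_lower_bound (n : ℕ) (f d : (Fin n → Bool) → ℝ)
    (hf : ∀ x, 0 ≤ f x) (hd : ∀ x, 0 ≤ d x) (lam : ℝ)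
    (hAd : ∀ x, adjOp d x ≥ lam * d x) :
    cubeInner (adjOp (cubeConv f d)) (cubeConv f d) ≥
      lam * cubeInner (cubeConv f d) (cubeConv f d) := by
  have key : ∀ x, adjOp (cubeConv f d) x ≥ lam * cubeConv f d x := by
    intro x
    rw [adj_conv]
    unfold cubeConv
    rw [← mul_div_assoc]
    apply div_le_div_of_nonneg_right _ (by positivity)
    rw [Finset.mul_sum]
    apply Finset.sum_le_sum
    intro y _
    calc lam * (f y * d fun i => xor (x i) (y i))
        = f y * (lam * d fun i => xor (x i) (y i)) := by ring
      _ ≤ f y * adjOp d fun i => xor (x i) (y i) :=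
          mul_le_mul_of_nonneg_left (hAd _) (hf y)
  unfold cubeInner
  rw [← mul_div_assoc, Finset.mul_sum]
  apply div_le_div_of_nonneg_right _ (by positivity)
  apply Finset.sum_le_sum
  intro x _
  rw [← mul_assoc]
  exact mul_le_mul_of_nonneg_right (key x) (conv_nonneg f d hf hd x)
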